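/- Let p be an odd prime, write p − 1 = 2^r·d with d odd and r ≥ 1, let α be a quadratic residue and β a quadratic non-residue in the multiplicative group of the field Z/pZ. If k is an integer with 0 ≤ k ≤ r − 1 such that α^(2^k·d) = 1, then there exists an integer i with 0 ≤ i ≤ 2^k − 1 such that (α^((d+1)/2) · β^(2^(r−1−k)·i·d))^2 = α; that is, a square root of α modulo p lies in the set { α^((d+1)/2) · β^(2^(r−1−k)·i·d) : 0 ≤ i ≤ 2^k − 1 }. -/

import Mathlib

/-- **Theorem 2 (Set of possible solutions mod p).**
If `α` is a quadratic residue, `β` a quadratic non-residue mod the odd prime `p`,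
`p - 1 = 2^r * d` with `d` odd, and `0 ≤ k ≤ r - 1` satisfies `α^(2^k d) = 1`, then
a square root of `α` lies in `{ α^((d+1)/2) * β^(2^(r-1-k) i d) : 0 ≤ i ≤ 2^k - 1 }`. -/
theorem sqrt_mod_p_in_solution_set (p : ℕ) (hp : p.Prime) (hodd : Odd p)
    (r d : ℕ) (hr : 1 ≤ r) (hd : Odd d) (hpd : p - 1 = 2 ^ r * d)
    (α β : ZMod p) (hα : α ≠ 0) (hβ : β ≠ 0)
    (hαres : α ^ ((p - 1) / 2) = 1) (hβnres : β ^ ((p - 1) / 2) = -1)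
    (k : ℕ) (hk : k ≤ r - 1) (hαk : α ^ (2 ^ k * d) = 1) :
    ∃ i : ℕ, i ≤ 2 ^ k - 1 ∧
      (α ^ ((d + 1) / 2) * β ^ (2 ^ (r - 1 - k) * i * d)) ^ 2 = α := by
  haveI : Fact p.Prime := ⟨hp⟩
  have hkr : k ≤ r := le_trans hk (Nat.sub_le r 1)
  have hkr' : k < r := lt_of_le_of_lt hk (Nat.sub_lt (lt_of_lt_of_le one_pos hr) one_pos)
  have hp2 : 2 < p := by
    have := hp.two_le
    rcases hodd with ⟨m, hm⟩
    omega
  haveI : Fact (2 < p) := ⟨hp2⟩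
  have hne : (-1 : ZMod p) ≠ 1 := ZMod.neg_one_ne_one
  -- generator
  obtain ⟨c, hc⟩ := IsCyclic.exists_generator (α := (ZMod p)ˣ)
  have horder : orderOf c = p - 1 := by
    rw [orderOf_eq_card_of_forall_mem_zpowers hc, Nat.card_eq_fintype_card, ZMod.card_units]
  set γ : ZMod p := (c : ZMod p) with hγ
  have hγpow : ∀ n : ℕ, γ ^ n = 1 ↔ (p - 1) ∣ n := by
    intro n
    rw [hγ, ← Units.val_pow_eq_pow_val, show (1 : ZMod p) = ((1 : (ZMod p)ˣ) : ZMod p) from rfl,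
      Units.val_inj, ← horder, orderOf_dvd_iff_pow_eq_one]
  -- write α, β as powers of γ
  obtain ⟨s, hs⟩ := Submonoid.mem_powers_iff _ _ |>.mp
    ((isOfFinOrder_of_finite c).mem_powers_iff_mem_zpowers.mpr (hc (Units.mk0 α hα)))
  obtain ⟨t, ht⟩ := Submonoid.mem_powers_iff _ _ |>.mp
    ((isOfFinOrder_of_finite c).mem_powers_iff_mem_zpowers.mpr (hc (Units.mk0 β hβ)))
  have hαγ : α = γ ^ s := by
    rw [hγ, ← Units.val_pow_eq_pow_val, hs]; rfl
  have hβγ : β = γ ^ t := by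
    rw [hγ, ← Units.val_pow_eq_pow_val, ht]; rfl
  have hd0 : 0 < d := hd.pos
  -- (p-1)/2 = 2^(r-1) * d
  have hhalf : (p - 1) / 2 = 2 ^ (r - 1) * d := by
    rw [hpd, show (2:ℕ)^r = 2 * 2^(r-1) by
      rw [← pow_succ']; congr 1; omega]
    rw [mul_assoc, Nat.mul_div_cancel_left _ two_pos]
  -- t is odd
  have htodd : ¬ 2 ∣ t := by
    intro ⟨t', ht'⟩
    have : β ^ ((p - 1) / 2) = 1 := by
      rw [hβγ, ← pow_mul, hγpow, hhalf, hpd, ht',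
        show (2:ℕ)^r = 2 * 2^(r-1) by rw [← pow_succ']; congr 1; omega]
      exact ⟨t', by ring⟩
    rw [hβnres] at this
    exact hne this
  -- 2^(r-k) ∣ s
  have hsdvd : 2 ^ (r - k) ∣ s := by
    have h1 : (p - 1) ∣ s * (2 ^ k * d) := by
      rw [← hγpow, pow_mul, ← hαγ]; exact hαk
    rw [hpd] at h1
    have h2 : 2 ^ r ∣ s * 2 ^ k := by
      have := (Nat.mul_dvd_mul_iff_right hd0).mp (by
        have : 2 ^ r * d ∣ (s * 2 ^ k) * d := by
          convert h1 using 1; ring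
        exact this)
      exact this
    have h3 : 2 ^ (r - k) * 2 ^ k ∣ s * 2 ^ k := by
      rwa [← pow_add, Nat.sub_add_cancel hkr]
    exact (Nat.mul_dvd_mul_iff_right (pow_pos two_pos k)).mp h3
  obtain ⟨s', hs'⟩ := hsdvd
  -- choose i
  haveI : NeZero (2 ^ k) := ⟨(pow_pos two_pos k).ne'⟩
  have hcop : Nat.Coprime t (2 ^ k) :=
    Nat.Coprime.pow_right k (((Nat.Prime.coprime_iff_not_dvd Nat.prime_two).mpr htodd).symm)
  set m : ZMod (2 ^ k) := -(s' : ZMod (2 ^ k)) * ((t : ℕ) : ZMod (2 ^ k))⁻¹ with hm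
  refine ⟨m.val, Nat.le_sub_one_of_lt (ZMod.val_lt m), ?_⟩
  set i := m.val with hi
  -- 2^k ∣ s' + t * i
  have hkey : 2 ^ k ∣ s' + t * i := by
    rw [← ZMod.natCast_eq_zero_iff]
    push_cast
    rw [hi, ZMod.natCast_rightInverse m, hm]
    have : ((t : ℕ) : ZMod (2^k)) * ((t : ℕ) : ZMod (2^k))⁻¹ = 1 :=
      ZMod.coe_mul_inv_eq_one t hcop
    calc (s' : ZMod (2^k)) + (t : ℕ) * (-(s' : ZMod (2 ^ k)) * ((t : ℕ) : ZMod (2 ^ k))⁻¹)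
        = (s' : ZMod (2^k)) - (s' : ZMod (2^k)) * (((t : ℕ) : ZMod (2^k)) * ((t : ℕ) : ZMod (2^k))⁻¹) := by ring
      _ = 0 := by rw [this]; ring
  -- main divisibility
  have hmain : γ ^ (s * d + t * (2 ^ (r - k) * i * d)) = 1 := by
    rw [hγpow, hpd, hs']
    obtain ⟨w, hw⟩ := hkey
    have : 2 ^ (r - k) * s' * d + t * (2 ^ (r - k) * i * d) = 2 ^ (r-k) * d * (s' + t * i) := by ring
    rw [this, hw]
    refine ⟨w, ?_⟩
    rw [show (2:ℕ)^r = 2^(r-k) * 2^k by rw [← pow_add]; congr 1; omega]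
    ring
  -- finish
  have hdeven : (d + 1) / 2 * 2 = d + 1 := by
    obtain ⟨e, he⟩ := hd; omega
  have hrk : 2 ^ (r - 1 - k) * i * d * 2 = 2 ^ (r - k) * i * d := by
    rw [show (2:ℕ)^(r-k) = 2^(r-1-k) * 2 by rw [← pow_succ]; congr 1; omega]
    ring
  calc (α ^ ((d + 1) / 2) * β ^ (2 ^ (r - 1 - k) * i * d)) ^ 2
      = α ^ ((d + 1) / 2 * 2) * β ^ (2 ^ (r - 1 - k) * i * d * 2) := by
        rw [mul_pow, ← pow_mul, ← pow_mul]
    _ = α ^ (d + 1) * β ^ (2 ^ (r - k) * i * d) := by rw [hdeven, hrk]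
    _ = α * (γ ^ (s * d + t * (2 ^ (r - k) * i * d))) := by
        rw [hαγ, hβγ, ← pow_mul, ← pow_mul, pow_add, ← pow_add]
        ring_nf
    _ = α := by rw [hmain, mul_one]
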